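/- Optimism of the finitely-iterated Q-estimate: suppose U ≥ 1, suppose max_{s∈S}(MQ*)(s) − min_{s∈S}(MQ*)(s) ≤ H, and suppose the concentration condition |(P̂_{s,a} − P_{s,a})·(MQ*)| ≤ 2√(𝕍(P̂_{s,a}, MQ*)·U/n(s,a)) + 14HU/(3·n(s,a)) holds for all (s,a) ∈ S×A. Let ε > 0 and let m be a natural number with γ^m·(1 + 32HU)/(1 − γ) ≤ ε. Then (T̂^m(0))(s,a) ≥ Q*(s,a) − ε for all (s,a) ∈ S×A, and Clip_H(M(T̂^m(0)))(s) ≥ (MQ*)(s) − ε for all s ∈ S, where 0 denotes the zero function on S×A. -/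
import Mathlib

open Finset

/-- Dot product of a probability vector `p` with a value vector `v`. -/
noncomputable def probDot {S : Type*} [Fintype S] (p v : S → ℝ) : ℝ :=
  ∑ s, p s * v s

/-- Variance of `v` under the probability vector `p`. -/
noncomputable def probVar {S : Type*} [Fintype S] (p v : S → ℝ) : ℝ :=
  (∑ s, p s * (v s) ^ 2) - (probDot p v) ^ 2

/-- `(MQ)(s) = max_a Q(s,a)`. -/
noncomputable def maxOp {S A : Type*} [Fintype A] [Nonempty A] (Q : S → A → ℝ) (s : S) : ℝ :=
  Finset.univ.sup' Finset.univ_nonempty (Q s)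

/-- `Clip_H(V)(s) = min (V s) (min_{s'} V s' + H)`. -/
noncomputable def clipOp {S : Type*} [Fintype S] [Nonempty S] (H : ℝ) (V : S → ℝ) (s : S) : ℝ :=
  min (V s) (Finset.univ.inf' Finset.univ_nonempty V + H)

/-- The exploration bonus `b(s,a,V)`. -/
noncomputable def bonus {S A : Type*} [Fintype S] (Phat : S → A → S → ℝ)
    (cnt : S → A → ℝ) (U H : ℝ) (s : S) (a : A) (V : S → ℝ) : ℝ :=
  max (4 * Real.sqrt (probVar (Phat s a) V * U / cnt s a)) (32 * H * U / cnt s a)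

/-- The clipped optimistic empirical Bellman operator `T̂`. -/
noncomputable def bellmanOp {S A : Type*} [Fintype S] [Fintype A] [Nonempty S] [Nonempty A]
    (γ H U : ℝ) (r : S → A → ℝ) (cnt : S → A → ℝ) (Phat : S → A → S → ℝ)
    (Q : S → A → ℝ) : S → A → ℝ := fun s a =>
  r s a + γ * probDot (Phat s a) (clipOp H (maxOp Q))
    + γ * bonus Phat cnt U H s a (clipOp H (maxOp Q))

section Aux
variable {S : Type*} [Fintype S]

lemma probDot_le_of_le (p v : S → ℝ) (M : ℝ) (hp : ∀ s, 0 ≤ p s)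
    (hsum : ∑ s, p s = 1) (h : ∀ s, v s ≤ M) : probDot p v ≤ M := by
  have h1 : probDot p v ≤ ∑ s, p s * M :=
    Finset.sum_le_sum fun s _ => mul_le_mul_of_nonneg_left (h s) (hp s)
  rw [← Finset.sum_mul, hsum, one_mul] at h1
  exact h1

lemma le_probDot (p v : S → ℝ) (M : ℝ) (hp : ∀ s, 0 ≤ p s)
    (hsum : ∑ s, p s = 1) (h : ∀ s, M ≤ v s) : M ≤ probDot p v := by
  have h1 : ∑ s, p s * M ≤ probDot p v :=
    Finset.sum_le_sum fun s _ => mul_le_mul_of_nonneg_left (h s) (hp s)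
  rw [← Finset.sum_mul, hsum, one_mul] at h1
  exact h1

lemma probDot_nonneg' (p v : S → ℝ) (hp : ∀ s, 0 ≤ p s) (hv : ∀ s, 0 ≤ v s) :
    0 ≤ probDot p v :=
  Finset.sum_nonneg fun s _ => mul_nonneg (hp s) (hv s)

lemma sum_centered (p v : S → ℝ) (c : ℝ) (hsum : ∑ s, p s = 1) :
    ∑ s, p s * (v s - c)^2 = probVar p v + (probDot p v - c)^2 := by
  have expand : ∀ s : S, p s * (v s - c)^2
      = p s * (v s)^2 - (2*c) * (p s * v s) + (c^2) * p s := fun s => by ring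
  simp only [expand]
  rw [Finset.sum_add_distrib, Finset.sum_sub_distrib, ← Finset.mul_sum, ← Finset.mul_sum, hsum]
  simp only [probVar, probDot]
  ring

lemma sum_centered_self (p v : S → ℝ) (hsum : ∑ s, p s = 1) :
    ∑ s, p s * (v s - probDot p v)^2 = probVar p v := by
  have h := sum_centered p v (probDot p v) hsum
  simpa using h

lemma probVar_nonneg' (p v : S → ℝ) (hp : ∀ s, 0 ≤ p s) (hsum : ∑ s, p s = 1) :
    0 ≤ probVar p v := by
  rw [← sum_centered_self p v hsum]
  exact Finset.sum_nonneg fun s _ => mul_nonneg (hp s) (sq_nonneg _)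

lemma probVar_comb_le (p v w d : S → ℝ) (c : ℝ) (hp : ∀ s, 0 ≤ p s)
    (hsum : ∑ s, p s = 1) (hv : ∀ s, v s = w s + c - d s) :
    probVar p v ≤ 2 * probVar p w + 2 * probVar p d := by
  have hEv : probDot p v = probDot p w + c - probDot p d := by
    simp only [probDot]
    have e : ∀ s : S, p s * v s = p s * w s + c * p s - p s * d s := fun s => by
      rw [hv s]; ring
    simp only [e]
    rw [Finset.sum_sub_distrib, Finset.sum_add_distrib, ← Finset.mul_sum, hsum]
    ring
  have hw := sum_centered_self p w hsum
  have hd := sum_centered_self p d hsum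
  have hvv := sum_centered_self p v hsum
  have key : ∑ s, p s * (v s - probDot p v)^2
      ≤ ∑ s, (2 * (p s * (w s - probDot p w)^2) + 2 * (p s * (d s - probDot p d)^2)) := by
    apply Finset.sum_le_sum
    intro s _
    rw [hv s, hEv]
    have h1 : (w s + c - d s - (probDot p w + c - probDot p d))
        = (w s - probDot p w) - (d s - probDot p d) := by ring
    rw [h1]
    nlinarith [hp s, sq_nonneg ((w s - probDot p w) + (d s - probDot p d)),
      sq_nonneg ((w s - probDot p w) - (d s - probDot p d))]
  rw [Finset.sum_add_distrib, ← Finset.mul_sum, ← Finset.mul_sum] at key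
  rw [hvv, hw, hd] at key
  exact key

lemma probVar_le_mul [Nonempty S] (p d : S → ℝ) (B m : ℝ) (hp : ∀ s, 0 ≤ p s)
    (hsum : ∑ s, p s = 1) (hm0 : 0 ≤ m) (hml : ∀ s, m ≤ d s)
    (hub : ∀ s, d s ≤ m + B) :
    probVar p d ≤ B * probDot p d := by
  have hB : 0 ≤ B := by
    obtain ⟨s⟩ := ‹Nonempty S›
    have := hml s; have := hub s; linarith
  have h := sum_centered p d m hsum
  have h1 : ∑ s, p s * (d s - m)^2 ≤ ∑ s, p s * ((d s - m) * B) := by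
    apply Finset.sum_le_sum
    intro s _
    apply mul_le_mul_of_nonneg_left _ (hp s)
    have h2 := hml s; have h3 := hub s
    nlinarith
  have h2 : ∑ s, p s * ((d s - m) * B) = B * (probDot p d - m) := by
    have e : ∀ s : S, p s * ((d s - m) * B) = B * (p s * d s) - (B*m) * p s :=
      fun s => by ring
    simp only [e]
    rw [Finset.sum_sub_distrib, ← Finset.mul_sum, ← Finset.mul_sum, hsum]
    simp only [probDot]
    ring
  have hEd : m ≤ probDot p d := le_probDot p d m hp hsum hml
  nlinarith [sq_nonneg (probDot p d - m)]

lemma sqrt_add_le' (a b : ℝ) (ha : 0 ≤ a) (hb : 0 ≤ b) :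
    Real.sqrt (a + b) ≤ Real.sqrt a + Real.sqrt b := by
  have h : a + b ≤ (Real.sqrt a + Real.sqrt b)^2 := by
    nlinarith [Real.sq_sqrt ha, Real.sq_sqrt hb, Real.sqrt_nonneg a, Real.sqrt_nonneg b,
      mul_nonneg (Real.sqrt_nonneg a) (Real.sqrt_nonneg b)]
  calc Real.sqrt (a+b) ≤ Real.sqrt ((Real.sqrt a + Real.sqrt b)^2) := Real.sqrt_le_sqrt h
    _ = Real.sqrt a + Real.sqrt b := Real.sqrt_sq (by positivity)

lemma two_sqrt_le' (a b : ℝ) (ha : 0 ≤ a) (hb : 0 ≤ b) :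
    2 * Real.sqrt (a * b) ≤ a + b := by
  rw [Real.sqrt_mul ha]
  nlinarith [Real.sq_sqrt ha, Real.sq_sqrt hb, sq_nonneg (Real.sqrt a - Real.sqrt b)]

lemma sqrt_two_le' : Real.sqrt 2 ≤ 36/25 := by
  have h : (2:ℝ) ≤ (36/25)^2 := by norm_num
  calc Real.sqrt 2 ≤ Real.sqrt ((36/25)^2) := Real.sqrt_le_sqrt h
    _ = 36/25 := Real.sqrt_sq (by norm_num)

end Aux

/-- Optimism of the finitely-iterated Q-estimate: under the span and
concentration conditions, if `γ^m (1 + 32HU)/(1-γ) ≤ ε` then the `m`-th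
iterate of `T̂` from zero is `ε`-optimistic for `Q*`, and its clipped value
function is `ε`-optimistic for `V* = MQ*`. -/
theorem bellmanOp_iterate_optimism
    {S A : Type*} [Fintype S] [Fintype A] [Nonempty S] [Nonempty A]
    (γ H U : ℝ) (hγ₀ : 0 < γ) (hγ₁ : γ < 1) (hH : 0 ≤ H) (hU : 1 ≤ U)
    (r : S → A → ℝ) (hr : ∀ s a, r s a ∈ Set.Icc (0 : ℝ) 1)
    (cnt : S → A → ℝ) (hcnt : ∀ s a, 1 ≤ cnt s a)
    (Phat : S → A → S → ℝ)
    (hPnonneg : ∀ s a s', 0 ≤ Phat s a s')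
    (hPle : ∀ s a s', Phat s a s' ≤ 1)
    (hPsum : ∀ s a, ∑ s', Phat s a s' = 1)
    (P : S → A → S → ℝ)
    (hPtrueNonneg : ∀ s a s', 0 ≤ P s a s')
    (hPtrueLe : ∀ s a s', P s a s' ≤ 1)
    (hPtrueSum : ∀ s a, ∑ s', P s a s' = 1)
    (Qstar : S → A → ℝ)
    (hBellman : ∀ s a, Qstar s a = r s a + γ * probDot (P s a) (maxOp Qstar))
    (hspan : Finset.univ.sup' Finset.univ_nonempty (maxOp Qstar)
        - Finset.univ.inf' Finset.univ_nonempty (maxOp Qstar) ≤ H)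
    (hconc : ∀ s a,
      |probDot (Phat s a) (maxOp Qstar) - probDot (P s a) (maxOp Qstar)|
        ≤ 2 * Real.sqrt (probVar (Phat s a) (maxOp Qstar) * U / cnt s a)
          + 14 * H * U / (3 * cnt s a))
    (ε : ℝ) (hε : 0 < ε) (m : ℕ)
    (hm : γ ^ m * (1 + 32 * H * U) / (1 - γ) ≤ ε) :
    (∀ s a, Qstar s a - ε ≤ (bellmanOp γ H U r cnt Phat)^[m] (fun _ _ => 0) s a)
    ∧
    (∀ s, maxOp Qstar s - ε
      ≤ clipOp H (maxOp ((bellmanOp γ H U r cnt Phat)^[m] (fun _ _ => 0))) s) := by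
  have h1γ : 0 < 1 - γ := by linarith
  have hU0 : (0:ℝ) < U := lt_of_lt_of_le one_pos hU
  -- span of Vstar
  have hVspan : ∀ s t : S, maxOp Qstar s ≤ maxOp Qstar t + H := by
    intro s t
    have h1 : maxOp Qstar s ≤ Finset.univ.sup' Finset.univ_nonempty (maxOp Qstar) :=
      Finset.le_sup' _ (Finset.mem_univ s)
    have h2 : Finset.univ.inf' Finset.univ_nonempty (maxOp Qstar) ≤ maxOp Qstar t :=
      Finset.inf'_le _ (Finset.mem_univ t)
    linarith
  have hQle : ∀ s a, Qstar s a ≤ maxOp Qstar s :=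
    fun s a => Finset.le_sup' (Qstar s) (Finset.mem_univ a)
  -- upper bound on Vstar
  have hVle : ∀ s, maxOp Qstar s ≤ 1/(1-γ) := by
    have hM : Finset.univ.sup' Finset.univ_nonempty (maxOp Qstar) ≤ 1/(1-γ) := by
      obtain ⟨s₀, -, hs₀⟩ := Finset.exists_mem_eq_sup' Finset.univ_nonempty (maxOp Qstar)
      obtain ⟨a₀, -, ha₀⟩ := Finset.exists_mem_eq_sup' Finset.univ_nonempty (Qstar s₀)
      have e : maxOp Qstar s₀ = Qstar s₀ a₀ := ha₀
      have hdot : probDot (P s₀ a₀) (maxOp Qstar)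
          ≤ Finset.univ.sup' Finset.univ_nonempty (maxOp Qstar) :=
        probDot_le_of_le _ _ _ (hPtrueNonneg s₀ a₀) (hPtrueSum s₀ a₀)
          (fun t => Finset.le_sup' _ (Finset.mem_univ t))
      have hr1 := (hr s₀ a₀).2
      have hB := hBellman s₀ a₀
      rw [hs₀, e] at *
      rw [le_div_iff₀ h1γ]
      nlinarith [hγ₀.le]
    intro s
    exact le_trans (Finset.le_sup' _ (Finset.mem_univ s)) hM
  -- lower bound on clipped value functions
  have clip_lb : ∀ δ : ℝ, ∀ Q : S → A → ℝ, (∀ s a, Qstar s a - δ ≤ Q s a) →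
      ∀ s, maxOp Qstar s - δ ≤ clipOp H (maxOp Q) s := by
    intro δ Q hQ s
    have hVQ : ∀ t, maxOp Qstar t - δ ≤ maxOp Q t := by
      intro t
      obtain ⟨a₀, -, ha₀⟩ := Finset.exists_mem_eq_sup' Finset.univ_nonempty (Qstar t)
      have e : maxOp Qstar t = Qstar t a₀ := ha₀
      rw [e]
      calc Qstar t a₀ - δ ≤ Q t a₀ := hQ t a₀
        _ ≤ maxOp Q t := Finset.le_sup' (Q t) (Finset.mem_univ a₀)
    have hinf : Finset.univ.inf' Finset.univ_nonempty (maxOp Qstar) - δ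
        ≤ Finset.univ.inf' Finset.univ_nonempty (maxOp Q) := by
      apply Finset.le_inf'
      intro t _
      have h1 : Finset.univ.inf' Finset.univ_nonempty (maxOp Qstar) ≤ maxOp Qstar t :=
        Finset.inf'_le _ (Finset.mem_univ t)
      linarith [hVQ t]
    have hspan' : maxOp Qstar s
        ≤ Finset.univ.inf' Finset.univ_nonempty (maxOp Qstar) + H := by
      have h1 : maxOp Qstar s ≤ Finset.univ.sup' Finset.univ_nonempty (maxOp Qstar) :=
        Finset.le_sup' _ (Finset.mem_univ s)
      linarith
    simp only [clipOp, le_min_iff]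
    exact ⟨hVQ s, by linarith⟩
  -- one-step optimism propagation
  have step : ∀ δ : ℝ, 0 ≤ δ → ∀ Q : S → A → ℝ, (∀ s a, Qstar s a - δ ≤ Q s a) →
      ∀ s a, Qstar s a - γ * δ ≤ bellmanOp γ H U r cnt Phat Q s a := by
    intro δ hδ Q hQ s a
    set W := clipOp H (maxOp Q) with hWdef
    have hWlb : ∀ t, maxOp Qstar t - δ ≤ W t := clip_lb δ Q hQ
    have hWspan : ∀ t u : S, W t ≤ W u + H := by
      intro t u
      have h1 : W t ≤ Finset.univ.inf' Finset.univ_nonempty (maxOp Q) + H :=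
        min_le_right _ _
      have h2 : Finset.univ.inf' Finset.univ_nonempty (maxOp Q) ≤ W u := by
        simp only [hWdef, clipOp, le_min_iff]
        exact ⟨Finset.inf'_le _ (Finset.mem_univ u), by linarith⟩
      linarith
    set Δ := fun t => W t - maxOp Qstar t + δ with hΔdef
    have hΔ0 : ∀ t, 0 ≤ Δ t := by
      intro t
      have := hWlb t
      simp only [hΔdef]
      linarith
    obtain ⟨t₀, -, ht₀⟩ := Finset.exists_mem_eq_inf' (Finset.univ_nonempty (α := S)) Δ
    have hm0 : 0 ≤ Finset.univ.inf' Finset.univ_nonempty Δ := ht₀ ▸ hΔ0 t₀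
    have hml : ∀ t, Finset.univ.inf' Finset.univ_nonempty Δ ≤ Δ t :=
      fun t => Finset.inf'_le _ (Finset.mem_univ t)
    have hub : ∀ t, Δ t ≤ Finset.univ.inf' Finset.univ_nonempty Δ + 2*H := by
      intro t
      rw [ht₀]
      have hw := hWspan t t₀
      have hv := hVspan t₀ t
      simp only [hΔdef]
      linarith
    have hnn : (0:ℝ) < cnt s a := lt_of_lt_of_le one_pos (hcnt s a)
    have hpnn := hPnonneg s a
    have hpsum := hPsum s a
    have hVar0W : 0 ≤ probVar (Phat s a) W := probVar_nonneg' _ _ hpnn hpsum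
    have hVarΔ : probVar (Phat s a) Δ ≤ (2*H) * probDot (Phat s a) Δ :=
      probVar_le_mul _ _ (2*H) _ hpnn hpsum hm0 hml hub
    have hEd0 : 0 ≤ probDot (Phat s a) Δ := probDot_nonneg' _ _ hpnn hΔ0
    have hsplit : probVar (Phat s a) (maxOp Qstar)
        ≤ 2 * probVar (Phat s a) W + 2 * probVar (Phat s a) Δ :=
      probVar_comb_le _ _ W Δ δ hpnn hpsum (fun t => by simp only [hΔdef]; ring)
    have harg : probVar (Phat s a) (maxOp Qstar) * U / cnt s a
        ≤ 2 * (probVar (Phat s a) W * U / cnt s a)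
          + probDot (Phat s a) Δ * (4*H*U/cnt s a) := by
      have hU' : (0:ℝ) ≤ U / cnt s a := le_of_lt (div_pos hU0 hnn)
      have k1 := mul_le_mul_of_nonneg_right hsplit hU'
      have k2 := mul_le_mul_of_nonneg_right hVarΔ hU'
      ring_nf at k1 k2 ⊢
      linarith [k1, k2]
    have h4H : (0:ℝ) ≤ 4*H*U/cnt s a :=
      div_nonneg (mul_nonneg (mul_nonneg (by norm_num) hH) hU0.le) hnn.le
    have hsq : 2 * Real.sqrt (probVar (Phat s a) (maxOp Qstar) * U / cnt s a)
        ≤ 2 * Real.sqrt 2 * Real.sqrt (probVar (Phat s a) W * U / cnt s a)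
          + probDot (Phat s a) Δ + 4*H*U/cnt s a := by
      have a1 : (0:ℝ) ≤ probVar (Phat s a) W * U / cnt s a :=
        div_nonneg (mul_nonneg hVar0W hU0.le) hnn.le
      have a2 : (0:ℝ) ≤ probDot (Phat s a) Δ * (4*H*U/cnt s a) :=
        mul_nonneg hEd0 h4H
      have e1 := Real.sqrt_le_sqrt harg
      have e2 := sqrt_add_le' (2 * (probVar (Phat s a) W * U / cnt s a))
        (probDot (Phat s a) Δ * (4*H*U/cnt s a)) (by linarith) a2
      have e3 : Real.sqrt (2 * (probVar (Phat s a) W * U / cnt s a))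
          = Real.sqrt 2 * Real.sqrt (probVar (Phat s a) W * U / cnt s a) :=
        Real.sqrt_mul (by norm_num) _
      rw [e3] at e2
      have e4 : 2 * Real.sqrt (probDot (Phat s a) Δ * (4*H*U/cnt s a))
          ≤ probDot (Phat s a) Δ + 4*H*U/cnt s a :=
        two_sqrt_le' _ _ hEd0 h4H
      linarith [e1, e2, e4]
    have hbonus : 2 * Real.sqrt 2 * Real.sqrt (probVar (Phat s a) W * U / cnt s a)
        + (26/3) * (H*U/cnt s a) ≤ bonus Phat cnt U H s a W := by
      have hx0 : 0 ≤ Real.sqrt (probVar (Phat s a) W * U / cnt s a) :=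
        Real.sqrt_nonneg _
      have hz0 : (0:ℝ) ≤ H*U/cnt s a :=
        div_nonneg (mul_nonneg hH hU0.le) hnn.le
      have hm1 : 4 * Real.sqrt (probVar (Phat s a) W * U / cnt s a)
          ≤ bonus Phat cnt U H s a W := le_max_left _ _
      have hm2 : 32*H*U/cnt s a ≤ bonus Phat cnt U H s a W := le_max_right _ _
      have hs2 := sqrt_two_le'
      have hprod := mul_le_mul_of_nonneg_right hs2 hx0
      ring_nf at hm1 hm2 hprod hz0 hx0 ⊢
      linarith [hm1, hm2, hprod, hz0, hx0]
    have hcc := (abs_le.mp (hconc s a)).1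
    have hdotΔ : probDot (Phat s a) Δ
        = probDot (Phat s a) W - probDot (Phat s a) (maxOp Qstar) + δ := by
      simp only [probDot, hΔdef]
      have e : ∀ t : S, Phat s a t * (W t - maxOp Qstar t + δ)
          = Phat s a t * W t - Phat s a t * maxOp Qstar t + δ * Phat s a t :=
        fun t => by ring
      simp only [e]
      rw [Finset.sum_add_distrib, Finset.sum_sub_distrib, ← Finset.mul_sum, hpsum]
      ring
    have core : probDot (P s a) (maxOp Qstar) - δ
        ≤ probDot (Phat s a) W + bonus Phat cnt U H s a W := by
      ring_nf at hcc hsq hbonus hdotΔ ⊢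
      linarith [hcc, hsq, hbonus, hdotΔ]
    simp only [bellmanOp]
    rw [← hWdef, hBellman s a]
    nlinarith [mul_le_mul_of_nonneg_left core hγ₀.le]
  -- the iteration
  set C := (1 + 32*H*U)/(1-γ) with hCdef
  have hC0 : 0 ≤ C := div_nonneg (by nlinarith) h1γ.le
  have hQC : ∀ s a, Qstar s a - C ≤ 0 := by
    intro s a
    have h1 : Qstar s a ≤ 1/(1-γ) := le_trans (hQle s a) (hVle s)
    have h2 : 1/(1-γ) ≤ C := by
      rw [hCdef, div_le_div_iff₀ h1γ h1γ]
      nlinarith [mul_nonneg (mul_nonneg (mul_nonneg (by norm_num : (0:ℝ) ≤ 32) hH) hU0.le) h1γ.le]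
    linarith
  have iter : ∀ k : ℕ, ∀ s a,
      Qstar s a - γ^k * C ≤ (bellmanOp γ H U r cnt Phat)^[k] (fun _ _ => 0) s a := by
    intro k
    induction k with
    | zero => intro s a; simpa using hQC s a
    | succ k ih =>
        intro s a
        rw [Function.iterate_succ_apply']
        have h := step (γ^k * C) (mul_nonneg (pow_nonneg hγ₀.le k) hC0) _ ih s a
        have e : γ*(γ^k*C) = γ^(k+1)*C := by ring
        linarith
  have hmC : γ^m * C ≤ ε := by
    rw [hCdef, ← mul_div_assoc]
    exact hm
  constructor
  · intro s a
    have := iter m s a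
    linarith
  · intro s
    have h := clip_lb (γ^m * C) _ (iter m) s
    linarith
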